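/- Let C ⊂ ℝ^d be a compact set with λ_d(C) > 0 and whose boundary has Lebesgue measure zero, let X_1,…,X_n be i.i.d. uniform in C, and let N_{γn} be the number of d-element subsets {X_{i_1},…,X_{i_d}} all of whose pairwise distances are at most (γn)^{−1/(d−1)}. Then lim_{n→∞} E N_{γn} = c(d) γ^{−d} λ_d(C)^{−(d−1)}, where c(d) = (d!)^{−1} ∫_{(B^d)^{d−1}} ∏_{1≤i<j≤d−1} 1(‖y_i − y_j‖ ≤ 1) dy_1⋯dy_{d−1} ≤ (d!)^{−1} κ_d^{d−1}, and moreover E N_{γn} ≤ c(d) γ^{−d} λ_d(C)^{−(d−1)} for all n. -/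

import Mathlib

open MeasureTheory ProbabilityTheory Filter Set
open scoped Classical ENNReal

private abbrev Euc (m : ℕ) : Type := EuclideanSpace ℝ (Fin (m + 1))


lemma law_pi {Ω : Type*} [MeasurableSpace Ω] (P : Measure Ω) [IsProbabilityMeasure P]
    {α : Type*} [MeasurableSpace α] (μ0 : Measure α) [SigmaFinite μ0]
    (X : ℕ → Ω → α) (hXm : ∀ i, Measurable (X i))
    (hindep : iIndepFun X P)
    (hunif : ∀ i, Measure.map (X i) P = μ0) (k : ℕ) (e : Fin k → ℕ)
    (he : Function.Injective e) :
    Measure.map (fun ω (i : Fin k) => X (e i) ω) P = Measure.pi (fun _ => μ0) := by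
  refine (Measure.pi_eq fun s hs => ?_).symm
  have hmeas : Measurable fun ω (i : Fin k) => X (e i) ω :=
    measurable_pi_lambda _ fun i => hXm (e i)
  rw [Measure.map_apply hmeas (MeasurableSet.univ_pi hs)]
  have hpre : (fun ω (i : Fin k) => X (e i) ω) ⁻¹' (univ.pi s) = ⋂ i, X (e i) ⁻¹' s i := by
    ext ω; simp [Set.mem_pi]
  rw [hpre]
  set sets : ℕ → Set α := fun m => ⋂ (i : Fin k) (_ : e i = m), s i with hsets
  have hsets_e : ∀ i : Fin k, sets (e i) = s i := by
    intro i
    apply Subset.antisymm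
    · intro x hx
      simp only [hsets, Set.mem_iInter] at hx
      exact hx i rfl
    · intro x hx
      simp only [hsets, Set.mem_iInter]
      intro j hj
      rwa [he hj]
  have hmsets : ∀ m, MeasurableSet (sets m) :=
    fun m => MeasurableSet.iInter fun i => MeasurableSet.iInter fun _ => hs i
  have hiter : (⋂ i, X (e i) ⁻¹' s i) = ⋂ m ∈ Finset.image e Finset.univ, X m ⁻¹' sets m := by
    rw [Finset.set_biInter_finset_image]
    simp [hsets_e]
  rw [hiter, hindep.measure_inter_preimage_eq_mul _ (fun m _ => hmsets m),
    Finset.prod_image (fun i _ j _ h => he h)]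
  refine Finset.prod_congr rfl fun i _ => ?_
  rw [hsets_e, ← hunif (e i), Measure.map_apply (hXm (e i)) (hs i)]



lemma geo_main (m : ℕ) (C : Set (Euc m))
    (hCm : MeasurableSet C) {r : ℝ} (hr : 0 < r) :
    volume ((Set.pi Set.univ fun _ : Fin (m + 1) => C) ∩
        {v : Fin (m + 1) → Euc m | ∀ i j, dist (v i) (v j) ≤ r})
      = ENNReal.ofReal (r ^ (m * (m + 1))) *
        ∫⁻ x in C, volume {z : Fin m → Euc m |
          ((∀ i, ‖z i‖ ≤ 1) ∧ ∀ i j, ‖z i - z j‖ ≤ 1) ∧ ∀ j, x + r • z j ∈ C} := by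
  classical
  set B : Set (Fin (m + 1) → Euc m) := (Set.pi Set.univ fun _ => C) ∩
      {v | ∀ i j, dist (v i) (v j) ≤ r} with hBdef
  have hBmeas : MeasurableSet B := by
    refine (MeasurableSet.univ_pi fun _ => hCm).inter ?_
    have : {v : Fin (m + 1) → Euc m | ∀ i j, dist (v i) (v j) ≤ r}
        = ⋂ (i) (j), {v : Fin (m + 1) → Euc m | dist (v i) (v j) ≤ r} := by
      ext v; simp [Set.mem_iInter]
    rw [this]
    exact MeasurableSet.iInter fun i => MeasurableSet.iInter fun j =>
      measurableSet_le ((measurable_pi_apply i).dist (measurable_pi_apply j)) measurable_const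
  set W : Euc m → Set (Fin m → Euc m) := fun x =>
    {w | (∀ j, w j ∈ C ∧ dist x (w j) ≤ r) ∧ ∀ j k, dist (w j) (w k) ≤ r} with hWdef
  set Z : Euc m → Set (Fin m → Euc m) := fun x =>
    {z | ((∀ i, ‖z i‖ ≤ 1) ∧ ∀ i j, ‖z i - z j‖ ≤ 1) ∧ ∀ j, x + r • z j ∈ C} with hZdef
  set T : Set (Euc m × (Fin m → Euc m)) := {p | p.1 ∈ C ∧ p.2 ∈ W p.1} with hTdef
  -- step 1: split off coordinate 0
  have hpre : ⇑(MeasurableEquiv.piFinSuccAbove (fun _ : Fin (m + 1) => Euc m) 0).symm ⁻¹' B = T := by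
    ext ⟨x, w⟩
    have hsymm : (MeasurableEquiv.piFinSuccAbove (fun _ : Fin (m + 1) => Euc m) 0).symm (x, w)
        = Fin.cons x w := by
      simp [MeasurableEquiv.piFinSuccAbove, Fin.consEquiv]
    simp only [Set.mem_preimage, hsymm, hBdef, Set.mem_inter_iff, Set.mem_pi, Set.mem_univ,
      forall_true_left, Set.mem_setOf_eq, hTdef, hWdef]
    constructor
    · rintro ⟨h1, h2⟩
      refine ⟨h1 0, ⟨fun j => ⟨h1 j.succ, ?_⟩, fun j k => ?_⟩⟩
      · have := h2 0 j.succ; simpa using this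
      · have := h2 j.succ k.succ; simpa using this
    · rintro ⟨hx, ⟨hw, hww⟩⟩
      constructor
      · intro i
        rcases Fin.eq_zero_or_eq_succ i with rfl | ⟨j, rfl⟩
        · simpa using hx
        · simpa using (hw j).1
      · intro i j
        rcases Fin.eq_zero_or_eq_succ i with rfl | ⟨i', rfl⟩ <;>
          rcases Fin.eq_zero_or_eq_succ j with rfl | ⟨j', rfl⟩
        · simpa using hr.le
        · simpa using (hw j').2
        · simpa [dist_comm] using (hw i').2
        · simpa using hww i' j'
  have hTmeas : MeasurableSet T := by
    have := (MeasurableEquiv.piFinSuccAbove (fun _ : Fin (m + 1) => Euc m) 0).symm.measurable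
    have h := this hBmeas
    rwa [hpre] at h
  have h1 : volume B = (volume.prod volume) T := by
    have mp := measurePreserving_piFinSuccAbove (fun _ : Fin (m + 1) => (volume : Measure (Euc m))) 0
    have mps := MeasurePreserving.symm _ mp
    have := mps.measure_preimage hBmeas.nullMeasurableSet
    rw [hpre] at this
    exact this.symm
  -- step 2: Fubini
  have h2 : (volume.prod volume) T = ∫⁻ x, volume (Prod.mk x ⁻¹' T) := Measure.prod_apply hTmeas
  have h3 : ∀ x, volume (Prod.mk x ⁻¹' T) = C.indicator (fun x => volume (W x)) x := by
    intro x
    by_cases hx : x ∈ C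
    · rw [Set.indicator_of_mem hx]
      congr 1
      ext w
      simp [hTdef, hx]
    · rw [Set.indicator_of_notMem hx]
      have : Prod.mk x ⁻¹' T = ∅ := by
        ext w; simp [hTdef, hx]
      rw [this, measure_empty]
  -- step 3: scaling per slice
  haveI : Measure.IsAddHaarMeasure (volume : Measure (Fin m → Euc m)) :=
    Measure.pi.isAddHaarMeasure _
  have hD : Module.finrank ℝ (Fin m → Euc m) = m * (m + 1) := by
    have hEr : Module.finrank ℝ (Euc m) = m + 1 := by
      simp [Euc, finrank_euclideanSpace]
    rw [Module.finrank_pi_fintype]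
    simp [hEr, Finset.sum_const, mul_comm]
  have h4 : ∀ x : Euc m, volume (W x) = ENNReal.ofReal (r ^ (m * (m + 1))) * volume (Z x) := by
    intro x
    have h_norm : ∀ a : Euc m, ‖r⁻¹ • a‖ ≤ 1 ↔ ‖a‖ ≤ r := by
      intro a
      rw [norm_smul, norm_inv, Real.norm_eq_abs, abs_of_pos hr, ← div_eq_inv_mul, div_le_one hr]
    have hψ : W x = (fun w : Fin m → Euc m => w + fun _ => -x) ⁻¹' ((r⁻¹ • ·) ⁻¹' Z x) := by
      ext w
      simp only [Set.mem_preimage, hWdef, hZdef, Set.mem_setOf_eq, Pi.smul_apply, Pi.add_apply]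
      constructor
      · rintro ⟨hw, hww⟩
        refine ⟨⟨fun i => ?_, fun i j => ?_⟩, fun j => ?_⟩
        · rw [h_norm]
          have := (hw i).2
          rwa [dist_comm, dist_eq_norm, sub_eq_add_neg] at this
        · have : r⁻¹ • (w i + -x) - r⁻¹ • (w j + -x) = r⁻¹ • (w i - w j) := by
            rw [← smul_sub]; congr 1; abel
          rw [this, h_norm, ← dist_eq_norm]
          exact hww i j
        · have : x + r • r⁻¹ • (w j + -x) = w j := by
            rw [smul_inv_smul₀ hr.ne']; abel
          rw [this]
          exact (hw j).1
      · rintro ⟨⟨hn, hnn⟩, hc⟩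
        constructor
        · intro j
          refine ⟨?_, ?_⟩
          · have := hc j
            rwa [smul_inv_smul₀ hr.ne', show x + (w j + -x) = w j by abel] at this
          · have := (h_norm _).1 (hn j)
            rw [dist_comm, dist_eq_norm, sub_eq_add_neg]
            exact this
        · intro i j
          have heq : r⁻¹ • (w i - w j) = r⁻¹ • (w i + -x) - r⁻¹ • (w j + -x) := by
            rw [← smul_sub]; congr 1; abel
          have h2' : ‖r⁻¹ • (w i - w j)‖ ≤ 1 := by rw [heq]; exact hnn i j
          have := (h_norm _).1 h2'
          rwa [← dist_eq_norm] at this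
    rw [hψ, measure_preimage_add_right volume _ _,
      Measure.addHaar_preimage_smul volume (inv_ne_zero hr.ne') (Z x), hD]
    congr 2
    rw [← inv_pow, inv_inv, abs_of_pos (pow_pos hr _)]
  -- assemble
  rw [h1, h2]
  calc ∫⁻ x, volume (Prod.mk x ⁻¹' T)
      = ∫⁻ x, C.indicator (fun x => volume (W x)) x := by
        exact lintegral_congr h3
    _ = ∫⁻ x in C, volume (W x) := lintegral_indicator hCm _
    _ = ∫⁻ x in C, ENNReal.ofReal (r ^ (m * (m + 1))) * volume (Z x) := by
        exact lintegral_congr fun x => h4 x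
    _ = ENNReal.ofReal (r ^ (m * (m + 1))) * ∫⁻ x in C, volume (Z x) :=
        lintegral_const_mul' _ _ ENNReal.ofReal_ne_top



lemma geo_limit (m : ℕ) (C : Set (Euc m)) (hC : IsCompact C)
    (hCbd : volume (frontier C) = 0) (r : ℕ → ℝ) (hrpos : ∀ᶠ n in atTop, 0 < r n)
    (hrlim : Tendsto r atTop (nhds 0)) :
    Tendsto (fun n => ∫⁻ x in C, volume {z : Fin m → Euc m |
        ((∀ i, ‖z i‖ ≤ 1) ∧ ∀ i j, ‖z i - z j‖ ≤ 1) ∧ ∀ j, x + r n • z j ∈ C})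
      atTop (nhds (volume {z : Fin m → Euc m |
        (∀ i, ‖z i‖ ≤ 1) ∧ ∀ i j, ‖z i - z j‖ ≤ 1} * volume C)) := by
  classical
  set S : Set (Fin m → Euc m) := {z | (∀ i, ‖z i‖ ≤ 1) ∧ ∀ i j, ‖z i - z j‖ ≤ 1} with hSdef
  set F : ℕ → Euc m → ℝ≥0∞ := fun n x =>
    volume {z : Fin m → Euc m | ((∀ i, ‖z i‖ ≤ 1) ∧ ∀ i j, ‖z i - z j‖ ≤ 1) ∧
      ∀ j, x + r n • z j ∈ C} with hFdef
  have hCmeas : MeasurableSet C := hC.isClosed.measurableSet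
  have hSm : MeasurableSet S := by
    have : S = (⋂ i, {z : Fin m → Euc m | ‖z i‖ ≤ 1}) ∩
        ⋂ (i) (j), {z : Fin m → Euc m | ‖z i - z j‖ ≤ 1} := by
      ext z; simp [hSdef, Set.mem_iInter]
    rw [this]
    exact (MeasurableSet.iInter fun i =>
        measurableSet_le (measurable_pi_apply i).norm measurable_const).inter
      (MeasurableSet.iInter fun i => MeasurableSet.iInter fun j =>
        measurableSet_le ((measurable_pi_apply i).sub (measurable_pi_apply j)).norm
          measurable_const)
  have hFmeas : ∀ n, Measurable (F n) := by
    intro n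
    have hT : MeasurableSet {p : Euc m × (Fin m → Euc m) |
        (((∀ i, ‖p.2 i‖ ≤ 1) ∧ ∀ i j, ‖p.2 i - p.2 j‖ ≤ 1) ∧ ∀ j, p.1 + r n • p.2 j ∈ C)} := by
      have : {p : Euc m × (Fin m → Euc m) |
          (((∀ i, ‖p.2 i‖ ≤ 1) ∧ ∀ i j, ‖p.2 i - p.2 j‖ ≤ 1) ∧ ∀ j, p.1 + r n • p.2 j ∈ C)}
          = (Prod.snd ⁻¹' S) ∩ ⋂ j, (fun p : Euc m × (Fin m → Euc m) =>
              p.1 + r n • p.2 j) ⁻¹' C := by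
        ext p; simp [hSdef, Set.mem_iInter]
      rw [this]
      refine (measurable_snd hSm).inter (MeasurableSet.iInter fun j => ?_)
      have hmf : Measurable fun p : Euc m × (Fin m → Euc m) => p.1 + r n • p.2 j := by
        fun_prop
      exact hmf hCmeas
    exact measurable_measure_prodMk_left (ν := (volume : Measure (Fin m → Euc m))) hT
  have hbound : ∀ n, ∀ x, F n x ≤ volume S := by
    intro n x
    exact measure_mono fun z hz => hz.1
  have hSfin : volume S ≠ ⊤ := by
    have hsub : S ⊆ Set.pi Set.univ fun _ : Fin m => Metric.closedBall (0 : Euc m) 1 := by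
      intro z hz i _
      simpa [Metric.mem_closedBall, dist_zero_right] using hz.1 i
    have : volume S ≤ ∏ _i : Fin m, volume (Metric.closedBall (0 : Euc m) 1) := by
      refine le_trans (measure_mono hsub) ?_
      rw [volume_pi_pi]
    refine ne_top_of_le_ne_top ?_ this
    exact (ENNReal.prod_lt_top fun i _ => measure_closedBall_lt_top).ne
  have hae : ∀ᵐ x ∂volume.restrict C, Tendsto (fun n => F n x) atTop (nhds (volume S)) := by
    have h0 : volume (C \ interior C) = 0 := by
      rw [← hC.isClosed.frontier_eq]; exact hCbd
    have h1 : ∀ᵐ x ∂volume.restrict C, x ∈ interior C := by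
      rw [ae_iff, Measure.restrict_apply' hCmeas]
      have hsub : {x | ¬ x ∈ interior C} ∩ C ⊆ C \ interior C := fun x hx => ⟨hx.2, hx.1⟩
      exact measure_mono_null hsub h0
    filter_upwards [h1] with x hx
    obtain ⟨ε, hε, hball⟩ := Metric.isOpen_iff.mp isOpen_interior x hx
    have hev : ∀ᶠ n in atTop, F n x = volume S := by
      filter_upwards [hrlim.eventually (gt_mem_nhds hε), hrpos] with n hn hnpos
      simp only [hFdef]
      congr 1
      ext z
      simp only [hSdef, Set.mem_setOf_eq, and_iff_left_iff_imp]
      intro hz j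
      have hznorm : ‖r n • z j‖ ≤ r n := by
        rw [norm_smul, Real.norm_eq_abs, abs_of_pos hnpos]
        calc r n * ‖z j‖ ≤ r n * 1 := by
              exact mul_le_mul_of_nonneg_left (hz.1 j) hnpos.le
          _ = r n := mul_one _
      have : x + r n • z j ∈ Metric.ball x ε := by
        rw [Metric.mem_ball, dist_eq_norm]
        have : x + r n • z j - x = r n • z j := by abel
        rw [this]
        exact lt_of_le_of_lt hznorm hn
      exact interior_subset (hball this)
    exact Tendsto.congr' (hev.mono fun n h => h.symm) tendsto_const_nhds
  have := tendsto_lintegral_of_dominated_convergence (μ := volume.restrict C)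
    (fun _ => volume S) hFmeas (fun n => Filter.Eventually.of_forall (hbound n))
    (by rw [setLIntegral_const]; exact ENNReal.mul_ne_top hSfin hC.measure_lt_top.ne) hae
  rw [setLIntegral_const] at this
  exact this



lemma pi_uniform (m d : ℕ) (C : Set (Euc m)) (hCm : MeasurableSet C)
    (h0 : volume C ≠ 0) (hfin : volume C ≠ ⊤) (A : Set (Fin d → Euc m))
    (hA : MeasurableSet A) :
    Measure.pi (fun _ : Fin d => (volume C)⁻¹ • volume.restrict C) A
      = (volume C)⁻¹ ^ d * volume ((Set.pi Set.univ fun _ => C) ∩ A) := by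
  classical
  haveI hFM : IsFiniteMeasure ((volume C)⁻¹ • volume.restrict C) := by
    constructor
    rw [Measure.smul_apply, Measure.restrict_apply_univ, smul_eq_mul]
    exact ENNReal.mul_lt_top (ENNReal.inv_ne_top.mpr h0).lt_top hfin.lt_top
  have h2 : Measure.pi (fun _ : Fin d => volume.restrict C)
      = (volume : Measure (Fin d → Euc m)).restrict (Set.pi Set.univ fun _ => C) := by
    refine Measure.pi_eq fun s hs => ?_
    rw [Measure.restrict_apply (MeasurableSet.univ_pi hs)]
    have : (Set.pi Set.univ s) ∩ (Set.pi Set.univ fun _ => C)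
        = Set.pi Set.univ fun i => s i ∩ C := by
      ext v; simp [Set.mem_pi, forall_and]
    rw [this, volume_pi_pi]
    exact Finset.prod_congr rfl fun i _ => (Measure.restrict_apply (hs i)).symm
  have h1 : Measure.pi (fun _ : Fin d => (volume C)⁻¹ • volume.restrict C)
      = ((volume C)⁻¹ ^ d) • Measure.pi (fun _ : Fin d => volume.restrict C) := by
    refine Measure.pi_eq fun s hs => ?_
    rw [Measure.smul_apply, Measure.pi_pi, smul_eq_mul]
    simp only [Measure.smul_apply, smul_eq_mul]
    rw [Finset.prod_mul_distrib, Finset.prod_const, Finset.card_univ, Fintype.card_fin]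
  rw [h1, h2, Measure.smul_apply, Measure.restrict_apply hA, smul_eq_mul, Set.inter_comm]

lemma choose_ratio (k n : ℕ) :
    (n.choose k : ℝ) = (∏ i ∈ Finset.range k, ((n - i : ℕ) : ℝ)) / (k.factorial : ℝ) := by
  have h := Nat.descFactorial_eq_factorial_mul_choose n k
  have h2 : ((n.descFactorial k : ℕ) : ℝ) = (k.factorial : ℝ) * (n.choose k : ℝ) := by
    exact_mod_cast congrArg (Nat.cast : ℕ → ℝ) h
  rw [Nat.descFactorial_eq_prod_range] at h2
  push_cast at h2
  rw [h2]
  field_simp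

lemma choose_bound (k n : ℕ) (γ : ℝ) (hγ : 0 < γ) (hn : 1 ≤ n) :
    (n.choose k : ℝ) * (((γ * n) ^ k)⁻¹) ≤ (k.factorial : ℝ)⁻¹ * (γ ^ k)⁻¹ := by
  have hnpos : (0 : ℝ) < n := by exact_mod_cast hn
  have h1 : (n.choose k : ℝ) ≤ (n : ℝ) ^ k / (k.factorial : ℝ) := by
    have hd := Nat.descFactorial_le_pow n k
    have hd2 : (k.factorial : ℝ) * (n.choose k : ℝ) ≤ (n : ℝ) ^ k := by
      calc (k.factorial : ℝ) * (n.choose k : ℝ) = ((k.factorial * n.choose k : ℕ) : ℝ) := by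
            push_cast; ring
        _ = ((n.descFactorial k : ℕ) : ℝ) := by
            rw [Nat.descFactorial_eq_factorial_mul_choose]
        _ ≤ ((n ^ k : ℕ) : ℝ) := by exact_mod_cast hd
        _ = (n : ℝ) ^ k := by push_cast; ring
    rw [le_div_iff₀ (by positivity)]
    linarith [hd2]
  calc (n.choose k : ℝ) * (((γ * n) ^ k)⁻¹)
      ≤ ((n : ℝ) ^ k / (k.factorial : ℝ)) * (((γ * n) ^ k)⁻¹) := by
        apply mul_le_mul_of_nonneg_right h1 (by positivity)
    _ = (k.factorial : ℝ)⁻¹ * (γ ^ k)⁻¹ := by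
        rw [mul_pow]
        have : (k.factorial : ℝ) ≠ 0 := by positivity
        field_simp

lemma choose_tendsto (k : ℕ) (γ : ℝ) (hγ : 0 < γ) :
    Tendsto (fun n : ℕ => (n.choose k : ℝ) * (((γ * n) ^ k)⁻¹)) atTop
      (nhds ((k.factorial : ℝ)⁻¹ * (γ ^ k)⁻¹)) := by
  have hprod : Tendsto (fun n : ℕ => ∏ i ∈ Finset.range k, (((n - i : ℕ) : ℝ) / n)) atTop
      (nhds 1) := by
    have hfac : ∀ i ∈ Finset.range k,
        Tendsto (fun n : ℕ => ((n - i : ℕ) : ℝ) / n) atTop (nhds 1) := by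
      intro i _
      have h1 : Tendsto (fun n : ℕ => 1 - (i : ℝ) / n) atTop (nhds 1) := by
        have h2 := tendsto_const_div_atTop_nhds_zero_nat (i : ℝ)
        have h3 := (tendsto_const_nhds (x := (1:ℝ)) (f := atTop)).sub h2
        simpa using h3
      refine h1.congr' ?_
      filter_upwards [eventually_ge_atTop i, eventually_ge_atTop 1] with n hni hn1
      have hnpos : (0:ℝ) < n := by exact_mod_cast hn1
      rw [Nat.cast_sub hni]
      field_simp
    have h := tendsto_finset_prod (Finset.range k) hfac
    simpa using h
  have key : ∀ᶠ n : ℕ in atTop, (k.factorial : ℝ)⁻¹ * (γ ^ k)⁻¹ *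
      (∏ i ∈ Finset.range k, (((n - i : ℕ) : ℝ) / n))
      = (n.choose k : ℝ) * (((γ * n) ^ k)⁻¹) := by
    filter_upwards [eventually_ge_atTop 1] with n hn1
    have hnpos : (0:ℝ) < n := by exact_mod_cast hn1
    rw [choose_ratio k n, Finset.prod_div_distrib, Finset.prod_const, Finset.card_range,
      mul_pow]
    have hfac : (k.factorial : ℝ) ≠ 0 := by positivity
    field_simp
    try ring
    try exact Or.inl trivial
  have := (tendsto_const_nhds (x := (k.factorial : ℝ)⁻¹ * (γ ^ k)⁻¹) (f := atTop)).mul hprod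
  rw [mul_one] at this
  exact Tendsto.congr' key this



lemma exp_formula {α : Type*} [MeasurableSpace α] [PseudoMetricSpace α]
    [SecondCountableTopology α] [OpensMeasurableSpace α]
    {Ω : Type*} [MeasurableSpace Ω] (P : Measure Ω) [IsProbabilityMeasure P]
    (μ0 : Measure α) [SigmaFinite μ0]
    (X : ℕ → Ω → α) (hXm : ∀ i, Measurable (X i))
    (hindep : iIndepFun X P)
    (hunif : ∀ i, Measure.map (X i) P = μ0) (d n : ℕ) (r : ℝ) :
    ∫ ω, ((((Finset.univ : Finset (Fin n)).powersetCard d).filter fun J =>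
        ∀ i : Fin n, i ∈ J → ∀ j : Fin n, j ∈ J →
          dist (X (i : ℕ) ω) (X (j : ℕ) ω) ≤ r).card : ℝ) ∂P
      = (n.choose d : ℝ) *
        ((Measure.pi fun _ : Fin d => μ0)
          {v : Fin d → α | ∀ i j, dist (v i) (v j) ≤ r}).toReal := by
  set A : Set (Fin d → α) := {v : Fin d → α | ∀ i j, dist (v i) (v j) ≤ r} with hAdef
  have hA : MeasurableSet A := by
    have : A = ⋂ (i : Fin d) (j : Fin d), {v : Fin d → α | dist (v i) (v j) ≤ r} := by
      ext v; simp [hAdef, Set.mem_iInter]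
    rw [this]
    exact MeasurableSet.iInter fun i => MeasurableSet.iInter fun j =>
      measurableSet_le ((measurable_pi_apply i).dist (measurable_pi_apply j)) measurable_const
  set Ev : Finset (Fin n) → Set Ω := fun J =>
    {ω | ∀ i : Fin n, i ∈ J → ∀ j : Fin n, j ∈ J →
      dist (X (i : ℕ) ω) (X (j : ℕ) ω) ≤ r} with hEvdef
  have hEv : ∀ J, MeasurableSet (Ev J) := by
    intro J
    have : Ev J = ⋂ (i : Fin n) (_ : i ∈ J) (j : Fin n) (_ : j ∈ J),
        {ω | dist (X (i : ℕ) ω) (X (j : ℕ) ω) ≤ r} := by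
      ext ω; simp [hEvdef, Set.mem_iInter]
    rw [this]
    exact MeasurableSet.iInter fun i => MeasurableSet.iInter fun _ =>
      MeasurableSet.iInter fun j => MeasurableSet.iInter fun _ =>
        measurableSet_le ((hXm _).dist (hXm _)) measurable_const
  have hcard : ∀ ω, ((((Finset.univ : Finset (Fin n)).powersetCard d).filter fun J =>
        ∀ i : Fin n, i ∈ J → ∀ j : Fin n, j ∈ J →
          dist (X (i : ℕ) ω) (X (j : ℕ) ω) ≤ r).card : ℝ)
      = ∑ J ∈ (Finset.univ : Finset (Fin n)).powersetCard d,
          Set.indicator (Ev J) (fun _ => (1 : ℝ)) ω := by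
    intro ω
    rw [Finset.card_filter]
    push_cast
    refine Finset.sum_congr rfl fun J _ => ?_
    by_cases h : ω ∈ Ev J
    · rw [Set.indicator_of_mem h]; exact if_pos h
    · rw [Set.indicator_of_notMem h]; exact if_neg h
  simp_rw [hcard]
  rw [integral_finset_sum _ fun J _ => (integrable_const (1 : ℝ)).indicator (hEv J)]
  have hterm : ∀ J ∈ (Finset.univ : Finset (Fin n)).powersetCard d,
      ∫ ω, Set.indicator (Ev J) (fun _ => (1 : ℝ)) ω ∂P
        = ((Measure.pi fun _ : Fin d => μ0) A).toReal := by
    intro J hJ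
    obtain ⟨-, hJcard⟩ := Finset.mem_powersetCard.mp hJ
    have hint : ∫ ω, Set.indicator (Ev J) (fun _ => (1 : ℝ)) ω ∂P = (P (Ev J)).toReal := by
      exact integral_indicator_one (hEv J)
    rw [hint]
    -- build enumeration
    let e1 : Fin d ≃ {x // x ∈ J} := (finCongr hJcard.symm).trans J.equivFin.symm
    let e : Fin d → ℕ := fun k => ((e1 k : Fin n) : ℕ)
    have he : Function.Injective e :=
      Fin.val_injective.comp (Subtype.val_injective.comp e1.injective)
    have hEvA : Ev J = (fun ω (k : Fin d) => X (e k) ω) ⁻¹' A := by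
      ext ω
      constructor
      · intro h k l
        exact h (e1 k) (e1 k).2 (e1 l) (e1 l).2
      · intro h i hi j hj
        obtain ⟨k, hk⟩ := e1.surjective ⟨i, hi⟩
        obtain ⟨l, hl⟩ := e1.surjective ⟨j, hj⟩
        have := h k l
        simp only [e, hk, hl] at this
        exact this
    have hmeas : Measurable fun ω (k : Fin d) => X (e k) ω :=
      measurable_pi_lambda _ fun k => hXm (e k)
    rw [hEvA, ← Measure.map_apply hmeas hA, law_pi P μ0 X hXm hindep hunif d e he]
  rw [Finset.sum_congr rfl hterm, Finset.sum_const, Finset.card_powersetCard,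
    Finset.card_univ, Fintype.card_fin, nsmul_eq_mul]
theorem stmt_18 (d : ℕ) (hd : 2 ≤ d) (C : Set (EuclideanSpace ℝ (Fin d)))
    (hC : IsCompact C) (hCvol : 0 < volume C) (hCbd : volume (frontier C) = 0)
    (γ : ℝ) (hγ : 0 < γ)
    {Ω : Type*} [MeasurableSpace Ω] (P : Measure Ω) [IsProbabilityMeasure P]
    (X : ℕ → Ω → EuclideanSpace ℝ (Fin d)) (hXm : ∀ i, Measurable (X i))
    (hindep : iIndepFun X P)
    (hunif : ∀ i, Measure.map (X i) P = (volume C)⁻¹ • volume.restrict C) :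
    ∃ c : ℝ,
      c = ((d.factorial : ℝ))⁻¹ *
          (volume {y : Fin (d - 1) → EuclideanSpace ℝ (Fin d) |
            (∀ i, ‖y i‖ ≤ 1) ∧ ∀ i j, ‖y i - y j‖ ≤ 1}).toReal ∧
      c ≤ ((d.factorial : ℝ))⁻¹ *
          (volume (Metric.ball (0 : EuclideanSpace ℝ (Fin d)) 1)).toReal ^ (d - 1) ∧
      Tendsto (fun n : ℕ =>
          ∫ ω, ((((Finset.univ : Finset (Fin n)).powersetCard d).filter fun J =>
              ∀ i : Fin n, i ∈ J → ∀ j : Fin n, j ∈ J →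
                dist (X (i : ℕ) ω) (X (j : ℕ) ω) ≤ (γ * n) ^ (-(1 / ((d : ℝ) - 1)))).card : ℝ)
            ∂P)
        atTop (nhds (c / (γ ^ d * (volume C).toReal ^ (d - 1)))) ∧
      ∀ n : ℕ,
        (∫ ω, ((((Finset.univ : Finset (Fin n)).powersetCard d).filter fun J =>
              ∀ i : Fin n, i ∈ J → ∀ j : Fin n, j ∈ J →
                dist (X (i : ℕ) ω) (X (j : ℕ) ω) ≤ (γ * n) ^ (-(1 / ((d : ℝ) - 1)))).card : ℝ)
            ∂P)
          ≤ c / (γ ^ d * (volume C).toReal ^ (d - 1)) := by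
  classical
  obtain ⟨m, rfl⟩ : ∃ m, d = m + 1 := ⟨d - 1, by omega⟩
  have hm : 1 ≤ m := by omega
  have hCm : MeasurableSet C := hC.isClosed.measurableSet
  have hCfin : volume C ≠ ⊤ := hC.measure_lt_top.ne
  have hC0 : volume C ≠ 0 := hCvol.ne'
  set volCr : ℝ := (volume C).toReal with hvolCr
  have hvolCrpos : 0 < volCr := ENNReal.toReal_pos hC0 hCfin
  set S : Set (Fin m → Euc m) :=
    {z | (∀ i, ‖z i‖ ≤ 1) ∧ ∀ i j, ‖z i - z j‖ ≤ 1} with hSdef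
  have hSfin : volume S ≠ ⊤ := by
    have hsub : S ⊆ Set.pi Set.univ fun _ : Fin m => Metric.closedBall (0 : Euc m) 1 := by
      intro z hz i _
      simpa [Metric.mem_closedBall, dist_zero_right] using hz.1 i
    have hle : volume S ≤ ∏ _i : Fin m, volume (Metric.closedBall (0 : Euc m) 1) := by
      refine le_trans (measure_mono hsub) ?_
      rw [volume_pi_pi]
    refine ne_top_of_le_ne_top ?_ hle
    exact (ENNReal.prod_lt_top fun i _ => measure_closedBall_lt_top).ne
  refine ⟨((m + 1).factorial : ℝ)⁻¹ * (volume S).toReal, rfl, ?_, ?_⟩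
  · -- upper bound for c
    have h1 : volume S ≤ volume (Metric.closedBall (0 : Euc m) 1) ^ m := by
      have hsub : S ⊆ Set.pi Set.univ fun _ : Fin m => Metric.closedBall (0 : Euc m) 1 := by
        intro z hz i _
        simpa [Metric.mem_closedBall, dist_zero_right] using hz.1 i
      refine le_trans (measure_mono hsub) ?_
      rw [volume_pi_pi, Finset.prod_const, Finset.card_univ, Fintype.card_fin]
    have h2 : volume (Metric.closedBall (0 : Euc m) 1) = volume (Metric.ball (0 : Euc m) 1) :=
      Measure.addHaar_closedBall_eq_addHaar_ball _ _ _
    rw [h2] at h1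
    have h3 : (volume S).toReal ≤ (volume (Metric.ball (0 : Euc m) 1)).toReal ^ m := by
      rw [← ENNReal.toReal_pow]
      exact ENNReal.toReal_mono (ENNReal.pow_ne_top measure_ball_lt_top.ne) h1
    have h4 : (m + 1 - 1) = m := by omega
    rw [h4]
    exact mul_le_mul_of_nonneg_left h3 (by positivity)
  · -- main part
    haveI hFM : IsFiniteMeasure ((volume C)⁻¹ • volume.restrict C) := by
      constructor
      rw [Measure.smul_apply, Measure.restrict_apply_univ, smul_eq_mul]
      exact ENNReal.mul_lt_top (ENNReal.inv_ne_top.mpr hC0).lt_top hCfin.lt_top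
    have hfin2 : volume S * volume C ≠ ⊤ := ENNReal.mul_ne_top hSfin hCfin
    have hmR : ((m : ℝ)) ≠ 0 := Nat.cast_ne_zero.mpr (by omega)
    have hcast : ((m + 1 : ℕ) : ℝ) - 1 = (m : ℝ) := by push_cast; ring
    set q : ℝ := -(1 / (((m + 1 : ℕ) : ℝ) - 1)) with hq
    set rr : ℕ → ℝ := fun n => (γ * n) ^ q with hrr
    have hrrpos : ∀ n : ℕ, 1 ≤ n → 0 < rr n := by
      intro n hn
      have h1 : (1 : ℝ) ≤ (n : ℝ) := by exact_mod_cast hn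
      have : (0 : ℝ) < γ * n := by nlinarith
      exact Real.rpow_pos_of_pos this q
    have hrrev : ∀ᶠ n in atTop, 0 < rr n := by
      filter_upwards [eventually_ge_atTop 1] with n hn
      exact hrrpos n hn
    have hrrlim : Tendsto rr atTop (nhds 0) := by
      have hbase : Tendsto (fun n : ℕ => γ * (n : ℝ)) atTop atTop :=
        (tendsto_natCast_atTop_atTop (R := ℝ)).const_mul_atTop hγ
      have hqneg : q = -(1 / (m : ℝ)) := by rw [hq, hcast]
      have h2 : Tendsto (fun x : ℝ => x ^ q) atTop (nhds 0) := by
        rw [hqneg]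
        exact tendsto_rpow_neg_atTop (by positivity)
      exact h2.comp hbase
    have hAmeas : ∀ t : ℝ,
        MeasurableSet {v : Fin (m + 1) → Euc m | ∀ i j, dist (v i) (v j) ≤ t} := by
      intro t
      have : {v : Fin (m + 1) → Euc m | ∀ i j, dist (v i) (v j) ≤ t}
          = ⋂ (i) (j), {v : Fin (m + 1) → Euc m | dist (v i) (v j) ≤ t} := by
        ext v; simp [Set.mem_iInter]
      rw [this]
      exact MeasurableSet.iInter fun i => MeasurableSet.iInter fun j =>
        measurableSet_le ((measurable_pi_apply i).dist (measurable_pi_apply j)) measurable_const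
    set J : ℕ → ℝ≥0∞ := fun n => ∫⁻ x in C, volume {z : Fin m → Euc m |
        ((∀ i, ‖z i‖ ≤ 1) ∧ ∀ i j, ‖z i - z j‖ ≤ 1) ∧ ∀ j, x + rr n • z j ∈ C} with hJ
    set K : ℕ → ℝ := fun n => (J n).toReal with hK
    set A1 : ℕ → ℝ := fun n =>
      (n.choose (m + 1) : ℝ) * (((γ * n) ^ (m + 1))⁻¹) * (volCr⁻¹) ^ (m + 1) with hA1
    set G : ℕ → ℝ := fun n => ((n.choose (m + 1) : ℝ)) *
      ((Measure.pi fun _ : Fin (m + 1) => (volume C)⁻¹ • volume.restrict C)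
        {v : Fin (m + 1) → Euc m | ∀ i j, dist (v i) (v j) ≤ rr n}).toReal with hG
    have hfun : (fun n : ℕ =>
        ∫ ω, ((((Finset.univ : Finset (Fin n)).powersetCard (m + 1)).filter fun J =>
            ∀ i : Fin n, i ∈ J → ∀ j : Fin n, j ∈ J →
              dist (X (i : ℕ) ω) (X (j : ℕ) ω) ≤ (γ * n) ^ q).card : ℝ) ∂P) = G :=
      funext fun n =>
        exp_formula P ((volume C)⁻¹ • volume.restrict C) X hXm hindep hunif (m + 1) n
          ((γ * n) ^ q)
    have hrD : ∀ n : ℕ, 1 ≤ n → (rr n) ^ (m * (m + 1)) = (((γ * n) ^ (m + 1))⁻¹) := by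
      intro n hn
      have h1 : (1 : ℝ) ≤ (n : ℝ) := by exact_mod_cast hn
      have hb : (0 : ℝ) < γ * n := by nlinarith
      have e1 : rr n = (γ * n) ^ q := rfl
      rw [e1, ← Real.rpow_natCast ((γ * (n : ℝ)) ^ q) (m * (m + 1)),
        ← Real.rpow_mul hb.le]
      have hqN : q * ((m * (m + 1) : ℕ) : ℝ) = -(((m + 1 : ℕ) : ℝ)) := by
        rw [hq, hcast]
        push_cast
        field_simp
      rw [hqN, Real.rpow_neg hb.le, Real.rpow_natCast]
    have hGn : ∀ n : ℕ, 1 ≤ n → G n = A1 n * K n := by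
      intro n hn
      have hr := hrrpos n hn
      have hpi := pi_uniform m (m + 1) C hCm hC0 hCfin _ (hAmeas (rr n))
      have hgeo := geo_main m C hCm hr
      simp only [hG, hA1, hK]
      rw [hpi, hgeo, ENNReal.toReal_mul, ENNReal.toReal_mul, ENNReal.toReal_pow,
        ENNReal.toReal_inv, ENNReal.toReal_ofReal (by positivity), hrD n hn]
      rw [← hvolCr]
      ring
    have hTendK : Tendsto K atTop (nhds ((volume S * volume C).toReal)) := by
      have h := geo_limit m C hC hCbd rr hrrev hrrlim
      exact (ENNReal.tendsto_toReal hfin2).comp h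
    have hTendA1 : Tendsto A1 atTop
        (nhds ((((m + 1).factorial : ℝ))⁻¹ * (γ ^ (m + 1))⁻¹ * (volCr⁻¹) ^ (m + 1))) := by
      have h := (choose_tendsto (m + 1) γ hγ).mul_const ((volCr⁻¹) ^ (m + 1))
      exact h
    have hval : (((m + 1).factorial : ℝ)⁻¹ * (volume S).toReal) /
          (γ ^ (m + 1) * (volume C).toReal ^ (m + 1 - 1))
        = (((m + 1).factorial : ℝ))⁻¹ * (γ ^ (m + 1))⁻¹ * (volCr⁻¹) ^ (m + 1) *
          ((volume S * volume C).toReal) := by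
      have h4 : m + 1 - 1 = m := by omega
      rw [h4, ENNReal.toReal_mul, ← hvolCr]
      have hfac : (((m + 1).factorial : ℕ) : ℝ) ≠ 0 := by positivity
      field_simp
      have hv : volCr ≠ 0 := hvolCrpos.ne'
      have hv2 : volCr ^ m ≠ 0 := pow_ne_zero _ hv
      calc _ = (volume S).toReal * (volCr * volCr⁻¹) * (volCr ^ m * (volCr ^ m)⁻¹) := by
            rw [mul_inv_cancel₀ hv, mul_inv_cancel₀ hv2]; ring
        _ = _ := by rw [one_div]; ring
    have hLim : Tendsto G atTop
        (nhds ((((m + 1).factorial : ℝ))⁻¹ * (γ ^ (m + 1))⁻¹ * (volCr⁻¹) ^ (m + 1) *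
          ((volume S * volume C).toReal))) := by
      refine Tendsto.congr' ?_ (hTendA1.mul hTendK)
      filter_upwards [eventually_ge_atTop 1] with n hn
      exact (hGn n hn).symm
    constructor
    · rw [hfun, hval]
      exact hLim
    · intro n
      have hfn := congrFun hfun n
      rw [hfn, hval]
      rcases Nat.eq_zero_or_pos n with rfl | hn
      · have hzero : G 0 = 0 := by
          simp [hG, Nat.choose_eq_zero_of_lt (by omega : (0 : ℕ) < m + 1)]
        rw [hzero]
        positivity
      · rw [hGn n hn]
        have hA1le : A1 n ≤ (((m + 1).factorial : ℝ))⁻¹ * (γ ^ (m + 1))⁻¹ *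
            (volCr⁻¹) ^ (m + 1) :=
          mul_le_mul_of_nonneg_right (choose_bound (m + 1) n γ hγ hn) (by positivity)
        have hJle : J n ≤ volume S * volume C := by
          calc J n ≤ ∫⁻ _x in C, volume S :=
                lintegral_mono fun x => measure_mono fun z hz => hz.1
            _ = volume S * volume C := setLIntegral_const _ _
        have hKle : K n ≤ (volume S * volume C).toReal := ENNReal.toReal_mono hfin2 hJle
        exact mul_le_mul hA1le hKle ENNReal.toReal_nonneg (by positivity)
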